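/- Let G, K ∈ ℝ^{n×n} be invertible with I + GK invertible, S = (I + GK)⁻¹, Λ ∈ ℝ^{n×n}, and suppose condition (C) holds: xᵀ(I − Λ)(KS)⁻¹Gᵀx < xᵀGGᵀx for all nonzero x. Let w ∈ ℝⁿ, ε > 0, let φ : ℝⁿ → ℝ be differentiable, strictly convex and radially unbounded, and set Π = G and Π̂ = ΛΠ + (I − Λ)(−K⁻¹). Then the map u ↦ φ(Πu + w) has a unique minimizer u* with Πu* + w = argmin_y φ(y), and every continuously differentiable solution u : [0,∞) → ℝⁿ of u̇(t) = −ε Π̂ᵀ ∇φ(Πu(t) + w) converges to u* as t → ∞. -/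

import Mathlib

open Matrix Filter Set RealInnerProductSpace

section Aux

lemma toEuclideanLin_mul_apply {n : ℕ} (A B : Matrix (Fin n) (Fin n) ℝ)
    (x : EuclideanSpace ℝ (Fin n)) :
    Matrix.toEuclideanLin (A * B) x = Matrix.toEuclideanLin A (Matrix.toEuclideanLin B x) := by
  simp [Matrix.toEuclideanLin_apply, Matrix.mulVec_mulVec]

lemma toEuclideanLin_one_apply {n : ℕ} (x : EuclideanSpace ℝ (Fin n)) :
    Matrix.toEuclideanLin (1 : Matrix (Fin n) (Fin n) ℝ) x = x := by
  simp [Matrix.toEuclideanLin_apply]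

lemma grad_ineq {E : Type*} [NormedAddCommGroup E] [InnerProductSpace ℝ E] [CompleteSpace E]
    {φ : E → ℝ} (hconv : ConvexOn ℝ Set.univ φ) (hdiff : Differentiable ℝ φ) (y z : E) :
    ⟪gradient φ y, z - y⟫ ≤ φ z - φ y := by
  set ψ : ℝ → ℝ := fun t => φ (y + t • (z - y)) with hψ
  have hc : ∀ t : ℝ, HasDerivAt (fun s : ℝ => y + s • (z - y)) (z - y) t := by
    intro t
    simpa using ((hasDerivAt_id t).smul_const (z - y)).const_add y
  have hd : HasDerivAt ψ ⟪gradient φ y, z - y⟫ 0 := by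
    have h1 : HasFDerivAt φ ((InnerProductSpace.toDual ℝ E) (gradient φ y)) (y + (0:ℝ) • (z - y)) := by
      rw [zero_smul, add_zero]; exact (hdiff y).hasGradientAt
    have h2 := h1.comp_hasDerivAt 0 (hc 0)
    rw [InnerProductSpace.toDual_apply_apply] at h2
    exact h2
  have hslope : Tendsto (slope ψ 0) (nhdsWithin 0 (Set.Ioi 0)) (nhds ⟪gradient φ y, z - y⟫) :=
    (hasDerivAt_iff_tendsto_slope.mp hd).mono_left
      (nhdsWithin_mono _ (fun t ht => ne_of_gt ht))
  refine le_of_tendsto hslope ?_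
  filter_upwards [Ioo_mem_nhdsGT (by norm_num : (0:ℝ) < 1)] with t ht
  have ht0 : 0 < t := ht.1
  have ht1 : t < 1 := ht.2
  have hcx := hconv.2 (Set.mem_univ y) (Set.mem_univ z) (by linarith : (0:ℝ) ≤ 1 - t)
    (le_of_lt ht0) (by ring)
  have key : ψ t ≤ (1 - t) * φ y + t * φ z := by
    have : y + t • (z - y) = (1 - t) • y + t • z := by
      simp [smul_sub, sub_smul]; abel
    rw [hψ]; simp only; rw [this]; exact hcx
  have hsl : slope ψ 0 t = (ψ t - ψ 0) / t := by rw [slope_def_field]; ring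
  rw [hsl, div_le_iff₀ ht0]
  have hψ0 : ψ 0 = φ y := by simp [hψ]
  rw [hψ0]
  nlinarith

lemma anti_of_deriv {f f' : ℝ → ℝ} (hf : ∀ t ∈ Set.Ici (0:ℝ), HasDerivAt f (f' t) t)
    (h0 : ∀ t ∈ Set.Ioi (0:ℝ), f' t ≤ 0) : AntitoneOn f (Set.Ici 0) := by
  refine antitoneOn_of_deriv_nonpos (convex_Ici 0)
    (fun t ht => (hf t ht).continuousAt.continuousWithinAt) ?_ ?_
  · rw [interior_Ici]
    exact fun t ht => (hf t (Set.mem_Ici.mpr (le_of_lt ht))).differentiableAt.differentiableWithinAt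
  · rw [interior_Ici]
    intro t ht
    rw [(hf t (Set.mem_Ici.mpr (le_of_lt ht))).deriv]
    exact h0 t ht

lemma decay_of_deriv {f f' : ℝ → ℝ} {C : ℝ}
    (hf : ∀ t ∈ Set.Ici (0:ℝ), HasDerivAt f (f' t) t)
    (h0 : ∀ t ∈ Set.Ici (0:ℝ), f' t ≤ -C) : ∀ t ∈ Set.Ici (0:ℝ), f t ≤ f 0 - C * t := by
  intro t ht
  have := anti_of_deriv (f := fun t => f t + C * t) (f' := fun t => f' t + C)
    (fun s hs => (hf s hs).add ((hasDerivAt_id s).const_mul C |>.congr_deriv (by ring)))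
    (fun s hs => by have := h0 s (Set.mem_Ici.mpr (le_of_lt hs)); show f' s + C ≤ 0; linarith)
  have h2 := this (Set.mem_Ici.mpr le_rfl) ht ht
  simp at h2
  linarith

lemma sublevel_bdd {E : Type*} [NormedAddCommGroup E]
    {φ : E → ℝ} (hrad : Tendsto φ (comap norm atTop) atTop) (c : ℝ) :
    ∃ R : ℝ, 1 ≤ R ∧ ∀ z, φ z ≤ c → ‖z‖ ≤ R := by
  have h := hrad.eventually (eventually_gt_atTop c)
  rw [eventually_comap] at h
  rcases eventually_atTop.mp h with ⟨a, ha⟩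
  refine ⟨max a 1, le_max_right _ _, fun z hz => ?_⟩
  by_contra hgt
  push_neg at hgt
  have h1 : a ≤ ‖z‖ := le_trans (le_max_left a 1) (le_of_lt hgt)
  exact absurd hz (not_le.mpr (ha ‖z‖ h1 z rfl))

lemma quad_form_eq {n : ℕ} (M : Matrix (Fin n) (Fin n) ℝ) (x : EuclideanSpace ℝ (Fin n)) :
    ⟪x, Matrix.toEuclideanLin M x⟫ = (WithLp.equiv 2 _ x) ⬝ᵥ M.mulVec (WithLp.equiv 2 _ x) := by
  simp [PiLp.inner_apply, Matrix.toEuclideanLin_apply, dotProduct, mulVec, RCLike.inner_apply]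
  exact Finset.sum_congr rfl (fun _ _ => mul_comm _ _)

lemma quad_pos {n : ℕ} (M : Matrix (Fin n) (Fin n) ℝ)
    (hpos : ∀ x : Fin n → ℝ, x ≠ 0 → 0 < x ⬝ᵥ M.mulVec x) :
    ∃ α : ℝ, 0 < α ∧ ∀ x : EuclideanSpace ℝ (Fin n),
      α * ‖x‖ ^ 2 ≤ ⟪x, Matrix.toEuclideanLin M x⟫ := by
  set q : EuclideanSpace ℝ (Fin n) → ℝ := fun x => ⟪x, Matrix.toEuclideanLin M x⟫ with hq
  have hqpos : ∀ x : EuclideanSpace ℝ (Fin n), x ≠ 0 → 0 < q x := by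
    intro x hx
    rw [hq]; simp only
    rw [quad_form_eq]
    apply hpos
    intro h
    apply hx
    have := congrArg (WithLp.equiv 2 (Fin n → ℝ)).symm h
    simpa using this
  have hqcont : Continuous q := by
    have : Continuous (fun x : EuclideanSpace ℝ (Fin n) => Matrix.toEuclideanLin M x) :=
      LinearMap.continuous_of_finiteDimensional _
    exact continuous_inner.comp (continuous_id.prodMk this)
  rcases isEmpty_or_nonempty (Fin n) with he | hne
  · refine ⟨1, one_pos, fun x => ?_⟩
    have hx0 : x = 0 := Subsingleton.elim x 0
    simp [hx0, hq]
  · have hnt : Nontrivial (EuclideanSpace ℝ (Fin n)) := by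
      obtain ⟨i⟩ := hne
      refine ⟨EuclideanSpace.single i 1, 0, fun h => ?_⟩
      have h2 : EuclideanSpace.single i (1:ℝ) i = 0 := by rw [h]; rfl
      rw [EuclideanSpace.single_apply] at h2
      simp at h2
    have hsne : (Metric.sphere (0 : EuclideanSpace ℝ (Fin n)) 1).Nonempty :=
      NormedSpace.sphere_nonempty.mpr zero_le_one
    obtain ⟨x₀, hx₀s, hx₀min⟩ := (isCompact_sphere (0 : EuclideanSpace ℝ (Fin n)) 1).exists_isMinOn
      hsne hqcont.continuousOn
    have hx₀norm : ‖x₀‖ = 1 := by simpa using hx₀s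
    have hx₀ne : x₀ ≠ 0 := by intro h; rw [h] at hx₀norm; simp at hx₀norm
    refine ⟨q x₀, hqpos x₀ hx₀ne, fun x => ?_⟩
    rcases eq_or_ne x 0 with rfl | hx
    · simp [hq]
    · have hnx : 0 < ‖x‖ := norm_pos_iff.mpr hx
      set v : EuclideanSpace ℝ (Fin n) := ‖x‖⁻¹ • x with hv
      have hvs : v ∈ Metric.sphere (0 : EuclideanSpace ℝ (Fin n)) 1 := by
        simp [hv, norm_smul, abs_of_pos (inv_pos.mpr hnx), inv_mul_cancel₀ (ne_of_gt hnx)]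
      have hqv : q v = ‖x‖⁻¹ ^ 2 * q x := by
        rw [hq]; simp only [hv]
        rw [LinearMap.map_smul, real_inner_smul_left, real_inner_smul_right]
        ring
      have hmin : q x₀ ≤ ‖x‖⁻¹ ^ 2 * q x := hqv ▸ hx₀min hvs
      show q x₀ * ‖x‖ ^ 2 ≤ q x
      calc q x₀ * ‖x‖ ^ 2 ≤ (‖x‖⁻¹ ^ 2 * q x) * ‖x‖ ^ 2 :=
            mul_le_mul_of_nonneg_right hmin (sq_nonneg _)
        _ = q x := by field_simp

lemma dot_transpose {n : ℕ} (A : Matrix (Fin n) (Fin n) ℝ) (x : Fin n → ℝ) :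
    x ⬝ᵥ Aᵀ.mulVec x = x ⬝ᵥ A.mulVec x := by
  rw [Matrix.dotProduct_mulVec, Matrix.vecMul_transpose, dotProduct_comm]

lemma matrix_pos {n : ℕ} (G K S Λ Phat : Matrix (Fin n) (Fin n) ℝ)
    (hK : IsUnit K.det) (hGK : IsUnit (1 + G * K).det)
    (hS : S = (1 + G * K)⁻¹)
    (hPhat : Phat = Λ * G + (1 - Λ) * (-K⁻¹))
    (hC : ∀ x : Fin n → ℝ, x ≠ 0 →
      x ⬝ᵥ ((1 - Λ) * (K * S)⁻¹ * G.transpose).mulVec x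
        < x ⬝ᵥ (G * G.transpose).mulVec x) :
    ∀ x : Fin n → ℝ, x ≠ 0 → 0 < x ⬝ᵥ (G * Phat.transpose).mulVec x := by
  have hKS : (K * S)⁻¹ = K⁻¹ + G := by
    rw [Matrix.mul_inv_rev, hS, Matrix.nonsing_inv_nonsing_inv _ hGK, add_mul, one_mul,
      mul_assoc, Matrix.mul_nonsing_inv K hK, mul_one]
  have hId : Phat * Gᵀ = G * Gᵀ - (1 - Λ) * (K * S)⁻¹ * Gᵀ := by
    rw [hKS, hPhat]
    noncomm_ring
  intro x hx
  have h1 : 0 < x ⬝ᵥ (Phat * Gᵀ).mulVec x := by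
    rw [hId, Matrix.sub_mulVec, dotProduct_sub, sub_pos]
    exact hC x hx
  have h2 : x ⬝ᵥ (G * Phatᵀ).mulVec x = x ⬝ᵥ (Phat * Gᵀ).mulVec x := by
    have h3 : G * Phatᵀ = (Phat * Gᵀ)ᵀ := by
      rw [Matrix.transpose_mul, Matrix.transpose_transpose]
    rw [h3, dot_transpose]
  rw [h2]; exact h1

end Aux

set_option maxHeartbeats 1000000 in
/-- **OAG convergence.** Under condition (C), with `Π = G` and biased model
`Π̂ = ΛΠ + (I − Λ)(−K⁻¹)`, the map `u ↦ φ(Πu + w)` has a unique minimizer `u*` with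
`Πu* + w = argmin_y φ(y)`, and every continuously differentiable solution of the OAG
dynamics `u̇ = −ε Π̂ᵀ ∇φ(Πu + w)` on `[0, ∞)` converges to `u*`. -/
theorem stmt14 {n : ℕ} (G K : Matrix (Fin n) (Fin n) ℝ)
    (hG : IsUnit G.det) (hK : IsUnit K.det) (hGK : IsUnit (1 + G * K).det)
    (S : Matrix (Fin n) (Fin n) ℝ) (hS : S = (1 + G * K)⁻¹)
    (Λ : Matrix (Fin n) (Fin n) ℝ)
    (hC : ∀ x : Fin n → ℝ, x ≠ 0 →
      x ⬝ᵥ ((1 - Λ) * (K * S)⁻¹ * G.transpose).mulVec x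
        < x ⬝ᵥ (G * G.transpose).mulVec x)
    (w : EuclideanSpace ℝ (Fin n)) (ε : ℝ) (hε : 0 < ε)
    (φ : EuclideanSpace ℝ (Fin n) → ℝ)
    (hdiff : Differentiable ℝ φ)
    (hconv : StrictConvexOn ℝ Set.univ φ)
    (hrad : Tendsto φ (comap norm atTop) atTop)
    (P Phat : Matrix (Fin n) (Fin n) ℝ)
    (hP : P = G) (hPhat : Phat = Λ * P + (1 - Λ) * (-K⁻¹)) :
    ∃ ustar : EuclideanSpace ℝ (Fin n),
      (∀ u, φ (Matrix.toEuclideanLin P ustar + w) ≤ φ (Matrix.toEuclideanLin P u + w)) ∧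
      (∀ u', (∀ u, φ (Matrix.toEuclideanLin P u' + w) ≤ φ (Matrix.toEuclideanLin P u + w)) →
        u' = ustar) ∧
      (∀ y, φ (Matrix.toEuclideanLin P ustar + w) ≤ φ y) ∧
      (∀ u : ℝ → EuclideanSpace ℝ (Fin n),
        ContDiffOn ℝ 1 u (Set.Ici 0) →
        (∀ t : ℝ, 0 ≤ t → HasDerivAt u
          (-(ε • Matrix.toEuclideanLin Phat.transpose
              (gradient φ (Matrix.toEuclideanLin P (u t) + w)))) t) →
        Tendsto u atTop (nhds ustar)) := by
  subst hP
  have φcont : Continuous φ := hdiff.continuous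
  -- global minimizer ystar of φ
  obtain ⟨R₀, hR₀1, hsub₀⟩ := sublevel_bdd hrad (φ 0)
  have hK₀ne : (Metric.closedBall (0:EuclideanSpace ℝ (Fin n)) R₀).Nonempty :=
    ⟨0, by simp; linarith⟩
  obtain ⟨ystar, hysK, hysmin⟩ :=
    (isCompact_closedBall (0:EuclideanSpace ℝ (Fin n)) R₀).exists_isMinOn hK₀ne φcont.continuousOn
  have hglob : ∀ z, φ ystar ≤ φ z := by
    intro z
    by_cases h : φ z ≤ φ 0
    · exact hysmin (by simpa [Metric.mem_closedBall, dist_zero_right] using hsub₀ z h)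
    · push_neg at h
      have h0 : φ ystar ≤ φ 0 := hysmin (by simp; linarith)
      linarith
  have huniq : ∀ z, (∀ z', φ z ≤ φ z') → z = ystar := by
    intro z hz
    exact hconv.eq_of_isMinOn (isMinOn_iff.mpr fun x _ => hz x)
      (isMinOn_iff.mpr fun x _ => hglob x) (Set.mem_univ z) (Set.mem_univ ystar)
  -- inverse facts
  have hPP : ∀ v : EuclideanSpace ℝ (Fin n), Matrix.toEuclideanLin P (Matrix.toEuclideanLin P⁻¹ v) = v := by
    intro v
    rw [← toEuclideanLin_mul_apply, Matrix.mul_nonsing_inv _ hG, toEuclideanLin_one_apply]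
  have hPP' : ∀ v : EuclideanSpace ℝ (Fin n), Matrix.toEuclideanLin P⁻¹ (Matrix.toEuclideanLin P v) = v := by
    intro v
    rw [← toEuclideanLin_mul_apply, Matrix.nonsing_inv_mul _ hG, toEuclideanLin_one_apply]
  set ustar : EuclideanSpace ℝ (Fin n) := Matrix.toEuclideanLin P⁻¹ (ystar - w) with hustar
  have hPustar : Matrix.toEuclideanLin P ustar + w = ystar := by
    rw [hustar, hPP, sub_add_cancel]
  refine ⟨ustar, ?_, ?_, ?_, ?_⟩
  · intro u; rw [hPustar]; exact hglob _
  · intro u' hu'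
    have hzmin : ∀ z, φ (Matrix.toEuclideanLin P u' + w) ≤ φ z := by
      intro z
      have := hu' (Matrix.toEuclideanLin P⁻¹ (z - w))
      rwa [hPP, sub_add_cancel] at this
    have hz := huniq _ hzmin
    have : Matrix.toEuclideanLin P u' = ystar - w := eq_sub_of_add_eq hz
    calc u' = Matrix.toEuclideanLin P⁻¹ (Matrix.toEuclideanLin P u') := (hPP' u').symm
      _ = ustar := by rw [this]
  · intro z; rw [hPustar]; exact hglob z
  -- the ODE part
  intro u hu1 hu'
  set y : ℝ → EuclideanSpace ℝ (Fin n) := fun t => Matrix.toEuclideanLin P (u t) + w with hy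
  set g : ℝ → EuclideanSpace ℝ (Fin n) := fun t => gradient φ (y t) with hg
  set M : Matrix (Fin n) (Fin n) ℝ := P * Phatᵀ with hM
  -- quadratic form positivity
  have hMpos := matrix_pos P K S Λ Phat hK hGK hS hPhat hC
  obtain ⟨α, hα, hquad⟩ := quad_pos M hMpos
  -- derivative of y
  have hy' : ∀ t ∈ Set.Ici (0:ℝ), HasDerivAt y ((-ε) • Matrix.toEuclideanLin M (g t)) t := by
    intro t ht
    have hL : HasFDerivAt (fun v : EuclideanSpace ℝ (Fin n) => Matrix.toEuclideanLin P v)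
        (LinearMap.toContinuousLinearMap (Matrix.toEuclideanLin P)) (u t) :=
      (LinearMap.toContinuousLinearMap (Matrix.toEuclideanLin P)).hasFDerivAt
    have hcomp := (hL.comp_hasDerivAt t (hu' t ht)).add_const w
    convert hcomp using 1
    show (-ε) • Matrix.toEuclideanLin M (g t)
      = Matrix.toEuclideanLin P (-(ε • Matrix.toEuclideanLin Phatᵀ (g t)))
    have hps : Matrix.toEuclideanLin P (ε • Matrix.toEuclideanLin Phatᵀ (g t))
        = ε • Matrix.toEuclideanLin M (g t) := by
      rw [LinearMap.map_smul, hM, toEuclideanLin_mul_apply]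
    rw [LinearMap.map_neg, hps, neg_smul]
    all_goals rfl
  -- derivative of V
  set V : ℝ → ℝ := fun t => φ (y t) with hV
  have hV' : ∀ t ∈ Set.Ici (0:ℝ),
      HasDerivAt V (-(ε * ⟪g t, Matrix.toEuclideanLin M (g t)⟫)) t := by
    intro t ht
    have hgr : HasFDerivAt φ ((InnerProductSpace.toDual ℝ (EuclideanSpace ℝ (Fin n))) (g t)) (y t) :=
      (hdiff (y t)).hasGradientAt
    have hcomp := hgr.comp_hasDerivAt t (hy' t ht)
    convert hcomp using 1
    · rfl
    · rfl
    · rfl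
    rw [InnerProductSpace.toDual_apply_apply, real_inner_smul_right]
    ring
  have hq0 : ∀ x : EuclideanSpace ℝ (Fin n), (0:ℝ) ≤ ⟪x, Matrix.toEuclideanLin M x⟫ := by
    intro x
    exact le_trans (by positivity) (hquad x)
  have hVanti : AntitoneOn V (Set.Ici 0) :=
    anti_of_deriv hV' (fun t ht => by
      have := hq0 (g t)
      have h1 : 0 ≤ ε * ⟪g t, Matrix.toEuclideanLin M (g t)⟫ := mul_nonneg hε.le this
      linarith)
  -- uniform bounds
  obtain ⟨R, hR1, hsub⟩ := sublevel_bdd hrad (V 0)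
  have hyball : ∀ t ∈ Set.Ici (0:ℝ), ‖y t‖ ≤ R := by
    intro t ht
    exact hsub _ (hVanti (Set.mem_Ici.mpr le_rfl) ht ht)
  have hysball : ‖ystar‖ ≤ R := hsub _ (hglob (y 0))
  set D : ℝ := 2 * R + 1 with hD
  have hDpos : 0 < D := by rw [hD]; linarith
  have hgl : ∀ t ∈ Set.Ici (0:ℝ), V t - φ ystar ≤ ‖g t‖ * D := by
    intro t ht
    have h1 : ⟪g t, ystar - y t⟫ ≤ φ ystar - φ (y t) :=
      grad_ineq hconv.convexOn hdiff (y t) ystar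
    have h2 : V t - φ ystar ≤ ⟪g t, y t - ystar⟫ := by
      have : ⟪g t, y t - ystar⟫ = -⟪g t, ystar - y t⟫ := by
        rw [← inner_neg_right, neg_sub]
      rw [this]
      simp only [hV]
      linarith
    have h3 : ⟪g t, y t - ystar⟫ ≤ ‖g t‖ * ‖y t - ystar‖ := real_inner_le_norm _ _
    have h4 : ‖y t - ystar‖ ≤ D := by
      calc ‖y t - ystar‖ ≤ ‖y t‖ + ‖ystar‖ := norm_sub_le _ _
        _ ≤ D := by rw [hD]; have := hyball t ht; linarith
    calc V t - φ ystar ≤ ⟪g t, y t - ystar⟫ := h2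
      _ ≤ ‖g t‖ * ‖y t - ystar‖ := h3
      _ ≤ ‖g t‖ * D := mul_le_mul_of_nonneg_left h4 (norm_nonneg _)
  -- infimum of V is φ ystar
  have hinfV : ∀ c, φ ystar < c → ∃ t₁, 0 ≤ t₁ ∧ V t₁ ≤ c := by
    intro c hc
    by_contra hcon
    push_neg at hcon
    have hVgt : ∀ t ∈ Set.Ici (0:ℝ), c < V t := fun t ht => hcon t ht
    set ρ : ℝ := c - φ ystar with hρ
    have hρpos : 0 < ρ := by rw [hρ]; linarith
    have hgm : ∀ t ∈ Set.Ici (0:ℝ), ρ / D ≤ ‖g t‖ := by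
      intro t ht
      rw [div_le_iff₀ hDpos]
      have := hgl t ht
      have := hVgt t ht
      linarith
    set C : ℝ := ε * (α * (ρ / D) ^ 2) with hCdef
    have hCpos : 0 < C := by
      have : 0 < ρ / D := div_pos hρpos hDpos
      positivity
    have hderiv_le : ∀ t ∈ Set.Ici (0:ℝ),
        -(ε * ⟪g t, Matrix.toEuclideanLin M (g t)⟫) ≤ -C := by
      intro t ht
      have h1 : (ρ / D) ^ 2 ≤ ‖g t‖ ^ 2 :=
        pow_le_pow_left₀ (le_of_lt (div_pos hρpos hDpos)) (hgm t ht) 2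
      have h2 : α * (ρ / D) ^ 2 ≤ α * ‖g t‖ ^ 2 := mul_le_mul_of_nonneg_left h1 hα.le
      have h3 := hquad (g t)
      have h4 : C ≤ ε * ⟪g t, Matrix.toEuclideanLin M (g t)⟫ :=
        mul_le_mul_of_nonneg_left (le_trans h2 h3) hε.le
      linarith
    have hdec := decay_of_deriv hV' hderiv_le
    set t₂ : ℝ := (V 0 - φ ystar + 1) / C with ht₂
    have hV0 : φ ystar ≤ V 0 := hglob _
    have ht₂pos : 0 < t₂ := div_pos (by linarith) hCpos
    have h5 := hdec t₂ (le_of_lt ht₂pos)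
    have h6 : C * t₂ = V 0 - φ ystar + 1 := by
      rw [ht₂]; field_simp
    have h7 : V t₂ ≤ φ ystar - 1 := by linarith
    have h8 : φ ystar ≤ V t₂ := hglob _
    linarith
  -- convergence of y to ystar
  have hytend : Tendsto y atTop (nhds ystar) := by
    rw [Metric.tendsto_atTop]
    intro δ hδ
    set Kδ : Set (EuclideanSpace ℝ (Fin n)) := Metric.closedBall 0 R \ Metric.ball ystar δ with hKδ
    have hKδc : IsCompact Kδ := (isCompact_closedBall _ _).diff Metric.isOpen_ball
    have hmem : ∀ t : ℝ, 0 ≤ t → V t < φ ystar + 1 → True := fun _ _ _ => trivial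
    rcases Set.eq_empty_or_nonempty Kδ with hemp | hne'
    · refine ⟨0, fun t ht => ?_⟩
      have hyt : y t ∈ Metric.closedBall (0:EuclideanSpace ℝ (Fin n)) R := by
        simpa [Metric.mem_closedBall, dist_zero_right] using hyball t ht
      by_contra hdist
      push_neg at hdist
      have : y t ∈ Kδ := ⟨hyt, fun hb => absurd (Metric.mem_ball.mp hb) (not_lt.mpr hdist)⟩
      rw [hemp] at this
      exact this
    · obtain ⟨z₀, hz₀K, hz₀min⟩ := hKδc.exists_isMinOn hne' φcont.continuousOn
      have hz₀ne : z₀ ≠ ystar := by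
        intro h
        apply hz₀K.2
        rw [h]
        exact Metric.mem_ball_self hδ
      have hc₁ : φ ystar < φ z₀ := by
        rcases lt_or_eq_of_le (hglob z₀) with h | h
        · exact h
        · exfalso
          apply hz₀ne
          apply huniq
          intro z'
          rw [← h]
          exact hglob z'
      set c : ℝ := (φ ystar + φ z₀) / 2 with hc
      obtain ⟨t₁, ht₁0, ht₁⟩ := hinfV c (by rw [hc]; linarith)
      refine ⟨t₁, fun t ht => ?_⟩
      have h0t : (0:ℝ) ≤ t := le_trans ht₁0 ht
      have hVt : V t ≤ c := le_trans (hVanti ht₁0 h0t ht) ht₁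
      by_contra hdist
      push_neg at hdist
      have hytK : y t ∈ Kδ := by
        constructor
        · simpa [Metric.mem_closedBall, dist_zero_right] using hyball t h0t
        · exact fun hb => absurd (Metric.mem_ball.mp hb) (not_lt.mpr hdist)
      have := hz₀min hytK
      have : φ z₀ ≤ V t := this
      rw [hc] at hVt
      linarith
  -- transfer to u
  have hueq : ∀ t : ℝ, u t = Matrix.toEuclideanLin P⁻¹ (y t - w) := by
    intro t
    rw [hy]
    simp only [add_sub_cancel_right]
    exact (hPP' (u t)).symm
  have hF : Continuous (fun v : EuclideanSpace ℝ (Fin n) => Matrix.toEuclideanLin P⁻¹ (v - w)) :=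
    (LinearMap.continuous_of_finiteDimensional _).comp (continuous_id.sub continuous_const)
  have htend2 : Tendsto (fun t => Matrix.toEuclideanLin P⁻¹ (y t - w)) atTop
      (nhds (Matrix.toEuclideanLin P⁻¹ (ystar - w))) :=
    (hF.tendsto ystar).comp hytend
  have : Tendsto u atTop (nhds ustar) := by
    rw [hustar]
    convert htend2 using 1
    funext t
    exact hueq t
  exact this
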